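/- Let d ≥ 2 and n be positive integers with d dividing n, and set r = (d-1)n/d. Define γ(n,d,r) = min{φ(f,d) : f an n-weight function with f⁺ = r}. Then γ(n,d,r) = C(r,d) + C(r,d-1). -/

import Mathlib

set_option maxHeartbeats 1000000

open Finset Nat


-- counting permutations mapping a given set onto a given set
lemma aux_perm_count {r c : ℕ} (C B : Finset (Fin r)) (hC : C.card = c) (hB : B.card = c) :
    (univ.filter fun e : Equiv.Perm (Fin r) => C.image ⇑e = B).card ≤ c ! * (r - c)! := by
  classical
  rw [← Fintype.card_subtype]
  have hinj : Function.Injective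
      (fun (p : {e : Equiv.Perm (Fin r) // C.image ⇑e = B}) =>
        ((⟨fun x => ⟨p.1 x.1, by
            have := Finset.mem_image_of_mem ⇑p.1 x.2
            rwa [p.2] at this⟩, by
            intro a b hab
            simp only [Subtype.mk.injEq] at hab
            exact Subtype.ext (p.1.injective hab)⟩ : (↥C ↪ ↥B)),
         (⟨fun x => ⟨p.1 x.1, by
            have hx := x.2
            simp only [Finset.mem_compl] at hx ⊢
            intro hmem
            have hmem' : p.1 x.1 ∈ C.image ⇑p.1 := by rw [p.2]; exact hmem
            obtain ⟨a, ha, hae⟩ := Finset.mem_image.1 hmem'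
            exact hx (by rwa [p.1.injective hae] at ha)⟩, by
            intro a b hab
            simp only [Subtype.mk.injEq] at hab
            exact Subtype.ext (p.1.injective hab)⟩ : (↥Cᶜ ↪ ↥(Bᶜ))))) := by
    intro p q hpq
    simp only [Prod.mk.injEq] at hpq
    obtain ⟨h1, h2⟩ := hpq
    apply Subtype.ext; apply Equiv.ext
    intro x
    by_cases hx : x ∈ C
    · have := congrFun (congrArg (fun (em : ↥C ↪ ↥B) => (em : ↥C → ↥B)) h1) ⟨x, hx⟩
      exact congrArg Subtype.val this
    · have := congrFun (congrArg (fun (em : ↥Cᶜ ↪ ↥(Bᶜ)) => (em : ↥Cᶜ → ↥(Bᶜ))) h2)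
        ⟨x, Finset.mem_compl.2 hx⟩
      exact congrArg Subtype.val this
  calc Fintype.card {e : Equiv.Perm (Fin r) // C.image ⇑e = B}
      ≤ Fintype.card ((↥C ↪ ↥B) × (↥Cᶜ ↪ ↥(Bᶜ))) := Fintype.card_le_of_injective _ hinj
    _ = c ! * (r - c)! := by
        rw [Fintype.card_prod, Fintype.card_embedding_eq, Fintype.card_embedding_eq]
        simp only [Fintype.card_coe, hC, hB, Finset.card_compl, Fintype.card_fin]
        rw [Nat.descFactorial_self, Nat.descFactorial_self]


lemma aux_card_lt {n m : ℕ} (h : m ≤ n) :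
    (univ.filter fun x : Fin n => (x : ℕ) < m).card = m := by
  have : (univ.filter fun x : Fin n => (x : ℕ) < m)
      = Finset.map (Fin.castLEEmb h) univ := by
    ext x
    rw [Finset.mem_map]
    simp only [mem_filter, mem_univ, true_and]
    constructor
    · intro hx
      refine ⟨⟨(x : ℕ), hx⟩, ?_⟩
      ext
      simp
    · rintro ⟨y, rfl⟩
      simpa using y.isLt
  rw [this, Finset.card_map, Finset.card_univ, Fintype.card_fin]

lemma aux_construction (d k n r : ℕ) (hd : 2 ≤ d) (hk : 1 ≤ k) (hn : n = d * k)
    (hrr : r = (d - 1) * k) :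
    ∃ f : Fin n → ℝ, 0 ≤ ∑ x, f x ∧ (univ.filter fun x => 0 ≤ f x).card = r ∧
      ((univ.powersetCard d).filter fun Y => 0 ≤ ∑ y ∈ Y, f y).card
        = r.choose d + r.choose (d - 1) := by
  classical
  have hdk : (d - 1) * k = d * k - k := by rw [Nat.sub_mul, one_mul]
  have hkn : k ≤ d * k := Nat.le_mul_of_pos_left k (by omega)
  have hrn : r + k = n := by omega
  have hrltn : r < n := by omega
  have hk0 : (0 : ℝ) < (k : ℝ) := by exact_mod_cast hk
  have hd2 : (2 : ℝ) ≤ (d : ℝ) := by exact_mod_cast hd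
  set w : ℕ → ℝ := fun i =>
    if i < r then 1 else if i = r then 3 / 2 - d else 1 - d - 1 / (2 * k) with hw
  refine ⟨fun x => w (x : ℕ), ?_, ?_, ?_⟩
  · -- total sum nonneg
    rw [Fin.sum_univ_eq_sum_range w n]
    rw [Finset.range_eq_Ico, ← Finset.sum_Ico_consecutive w (Nat.zero_le (r + 1)) (by omega),
      ← Finset.range_eq_Ico, Finset.sum_range_succ]
    have h1 : ∑ i ∈ Finset.range r, w i = r := by
      rw [Finset.sum_congr rfl (fun i hi => ?_), Finset.sum_const, card_range,
        nsmul_eq_mul, mul_one]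
      simp only [hw]
      rw [if_pos (Finset.mem_range.1 hi)]
    have h2 : w r = 3 / 2 - d := by simp [hw]
    have h3 : ∑ i ∈ Finset.Ico (r + 1) n, w i = ((k : ℝ) - 1) * (1 - d - 1 / (2 * k)) := by
      rw [Finset.sum_congr rfl (fun i hi => ?_), Finset.sum_const, Nat.card_Ico,
        nsmul_eq_mul]
      · congr 1
        have : n - (r + 1) = k - 1 := by omega
        rw [this]
        push_cast [hk]
        ring
      · have := (Finset.mem_Ico.1 hi).1
        simp only [hw]
        rw [if_neg (by omega), if_neg (by omega)]
    rw [h1, h2, h3]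
    have hrcast : (r : ℝ) = ((d : ℝ) - 1) * k := by
      rw [hrr, Nat.cast_mul, Nat.cast_sub (by omega : 1 ≤ d), Nat.cast_one]
    have key : (r : ℝ) + (3 / 2 - d) + ((k : ℝ) - 1) * (1 - d - 1 / (2 * k))
        = 1 / (2 * k) := by
      rw [hrcast]; field_simp; ring
    rw [key]
    positivity
  · -- f⁺ = r
    have : (univ.filter fun x : Fin n => 0 ≤ w (x : ℕ))
        = univ.filter fun x : Fin n => (x : ℕ) < r := by
      apply Finset.filter_congr
      intro x _
      simp only [hw]
      by_cases h1 : (x : ℕ) < r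
      · simp [h1]
      · rw [if_neg h1]
        by_cases h2 : (x : ℕ) = r
        · rw [if_pos h2]
          constructor <;> intro hh
          · linarith
          · omega
        · rw [if_neg h2]
          have hpos : 0 < 1 / (2 * (k : ℝ)) := by positivity
          constructor <;> intro hh
          · linarith
          · omega
    rw [this, aux_card_lt (le_of_lt hrltn)]
  · -- counting good d-sets
    have hcards : ∀ Y : Finset (Fin n),
        (Y.filter (fun x : Fin n => (x : ℕ) < r)).card + (Y.filter (fun x : Fin n => (x : ℕ) = r)).card
          + (Y.filter (fun x : Fin n => r < (x : ℕ))).card = Y.card := by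
      intro Y
      have h1 := Finset.card_filter_add_card_filter_not
        (s := Y) (p := fun x : Fin n => (x : ℕ) < r)
      have h2 := Finset.card_filter_add_card_filter_not
        (s := Y.filter (fun x : Fin n => ¬ (x : ℕ) < r)) (p := fun x : Fin n => (x : ℕ) = r)
      rw [Finset.filter_filter, Finset.filter_filter] at h2
      have e1 : Y.filter (fun x : Fin n => ¬ (x : ℕ) < r ∧ (x : ℕ) = r)
          = Y.filter (fun x : Fin n => (x : ℕ) = r) := by
        apply Finset.filter_congr; intro x _; constructor
        · exact fun h => h.2
        · intro h; exact ⟨by omega, h⟩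
      have e2 : Y.filter (fun x : Fin n => ¬ (x : ℕ) < r ∧ ¬ (x : ℕ) = r)
          = Y.filter (fun x : Fin n => r < (x : ℕ)) := by
        apply Finset.filter_congr; intro x _; constructor
        · intro h; omega
        · intro h; omega
      rw [e1, e2] at h2
      omega
    have hsumform : ∀ Y : Finset (Fin n), ∑ y ∈ Y, w (y : ℕ)
        = ((Y.filter (fun x : Fin n => (x : ℕ) < r)).card : ℝ)
          + ((Y.filter (fun x : Fin n => (x : ℕ) = r)).card : ℝ) * (3 / 2 - (d : ℝ))
          + ((Y.filter (fun x : Fin n => r < (x : ℕ))).card : ℝ) * (1 - d - 1 / (2 * k)) := by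
      intro Y
      rw [← Finset.sum_filter_add_sum_filter_not Y (fun x : Fin n => (x : ℕ) < r)]
      rw [← Finset.sum_filter_add_sum_filter_not
        (Y.filter (fun x : Fin n => ¬ (x : ℕ) < r)) (fun x : Fin n => (x : ℕ) = r)]
      rw [Finset.filter_filter, Finset.filter_filter]
      have e1 : Y.filter (fun x : Fin n => ¬ (x : ℕ) < r ∧ (x : ℕ) = r)
          = Y.filter (fun x : Fin n => (x : ℕ) = r) := by
        apply Finset.filter_congr; intro x _; constructor
        · exact fun h => h.2
        · intro h; exact ⟨by omega, h⟩
      have e2 : Y.filter (fun x : Fin n => ¬ (x : ℕ) < r ∧ ¬ (x : ℕ) = r)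
          = Y.filter (fun x : Fin n => r < (x : ℕ)) := by
        apply Finset.filter_congr; intro x _; constructor
        · intro h; omega
        · intro h; omega
      rw [e1, e2]
      have s1 : ∑ y ∈ Y.filter (fun x : Fin n => (x : ℕ) < r), w (y : ℕ)
          = ((Y.filter (fun x : Fin n => (x : ℕ) < r)).card : ℝ) := by
        rw [Finset.sum_congr rfl (fun x hx => ?_), Finset.sum_const, nsmul_eq_mul, mul_one]
        have := (Finset.mem_filter.1 hx).2
        simp only [hw]; rw [if_pos this]
      have s2 : ∑ y ∈ Y.filter (fun x : Fin n => (x : ℕ) = r), w (y : ℕ)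
          = ((Y.filter (fun x : Fin n => (x : ℕ) = r)).card : ℝ) * (3 / 2 - (d : ℝ)) := by
        rw [Finset.sum_congr rfl (fun x hx => ?_), Finset.sum_const, nsmul_eq_mul]
        have := (Finset.mem_filter.1 hx).2
        simp only [hw]; rw [if_neg (by omega), if_pos this]
      have s3 : ∑ y ∈ Y.filter (fun x : Fin n => r < (x : ℕ)), w (y : ℕ)
          = ((Y.filter (fun x : Fin n => r < (x : ℕ))).card : ℝ) * (1 - d - 1 / (2 * k)) := by
        rw [Finset.sum_congr rfl (fun x hx => ?_), Finset.sum_const, nsmul_eq_mul]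
        have := (Finset.mem_filter.1 hx).2
        simp only [hw]; rw [if_neg (by omega), if_neg (by omega)]
      rw [s1, s2, s3]
      ring
    have ha2 : ∀ Y : Finset (Fin n), (Y.filter (fun x : Fin n => (x : ℕ) = r)).card ≤ 1 := by
      intro Y
      apply Finset.card_le_one.2
      intro x hx y hy
      have hx' := (Finset.mem_filter.1 hx).2
      have hy' := (Finset.mem_filter.1 hy).2
      exact Fin.ext (by omega)
    have hT : ((univ : Finset (Fin n)).powersetCard d).filter
        (fun Y : Finset (Fin n) => 0 ≤ ∑ y ∈ Y, w (y : ℕ))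
        = (univ.filter fun x : Fin n => (x : ℕ) ≤ r).powersetCard d := by
      ext Y
      simp only [mem_filter, mem_powersetCard, subset_univ, true_and]
      constructor
      · rintro ⟨hcard, hsum⟩
        refine ⟨fun x hx => Finset.mem_filter.2 ⟨Finset.mem_univ _, ?_⟩, hcard⟩
        by_contra hgt
        push_neg at hgt
        have hb1 : 1 ≤ (Y.filter (fun x : Fin n => r < (x : ℕ))).card := by
          apply Finset.card_pos.2
          exact ⟨x, Finset.mem_filter.2 ⟨hx, hgt⟩⟩
        have hc := hcards Y
        rw [hcard] at hc
        set p := (Y.filter (fun x : Fin n => (x : ℕ) < r)).card with hp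
        set a := (Y.filter (fun x : Fin n => (x : ℕ) = r)).card with hA
        set b := (Y.filter (fun x : Fin n => r < (x : ℕ))).card with hb
        have hA1 := ha2 Y
        rw [hsumform Y] at hsum
        have hpcast : (p : ℝ) = (d : ℝ) - a - b := by
          have : p = d - a - b := by omega
          rw [this]
          push_cast [show a ≤ d by omega, show b ≤ d - a by omega]
          ring
        rw [hpcast] at hsum
        have haR : (0 : ℝ) ≤ a := by positivity
        have haR1 : (a : ℝ) ≤ 1 := by exact_mod_cast hA1
        have hbR : (1 : ℝ) ≤ b := by exact_mod_cast hb1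
        have hkR : (1 : ℝ) ≤ k := by exact_mod_cast hk
        have hdiv : 1 / (2 * (k : ℝ)) ≤ 1 / 2 := by
          apply one_div_le_one_div_of_le
          · norm_num
          · nlinarith
        have hdivpos : (0 : ℝ) < 1 / (2 * (k : ℝ)) := by positivity
        nlinarith [mul_nonneg haR (by linarith : (0:ℝ) ≤ (d:ℝ) - 1/2),
          mul_nonneg (by linarith : (0:ℝ) ≤ (b:ℝ) - 1) (by linarith : (0:ℝ) ≤ (d:ℝ)),
          mul_le_mul_of_nonneg_left hdiv (by linarith : (0:ℝ) ≤ (b:ℝ)),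
          mul_pos (by linarith : (0:ℝ) < (b:ℝ)) hdivpos]
      · rintro ⟨hsub, hcard⟩
        refine ⟨hcard, ?_⟩
        have hb0 : (Y.filter (fun x : Fin n => r < (x : ℕ))).card = 0 := by
          rw [Finset.card_eq_zero]
          apply Finset.filter_eq_empty_iff.2
          intro x hx
          have := (Finset.mem_filter.1 (hsub hx)).2
          omega
        have hc := hcards Y
        rw [hcard, hb0] at hc
        rw [hsumform Y, hb0]
        set p := (Y.filter (fun x : Fin n => (x : ℕ) < r)).card with hp
        set a := (Y.filter (fun x : Fin n => (x : ℕ) = r)).card with hA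
        have hA1 := ha2 Y
        have hpcast : (p : ℝ) = (d : ℝ) - a := by
          have : p = d - a := by omega
          rw [this]
          push_cast [show a ≤ d by omega]
          ring
        rw [hpcast]
        have haR : (0 : ℝ) ≤ (a : ℝ) := Nat.cast_nonneg a
        have haR1 : (a : ℝ) ≤ 1 := by exact_mod_cast hA1
        simp only [Nat.cast_zero, zero_mul, add_zero]
        nlinarith [mul_nonneg (by linarith : (0:ℝ) ≤ 1 - (a:ℝ)) (by linarith : (0:ℝ) ≤ (d:ℝ))]
    rw [hT, Finset.card_powersetCard]
    have hle : (univ.filter fun x : Fin n => (x : ℕ) ≤ r)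
        = univ.filter fun x : Fin n => (x : ℕ) < r + 1 := by
      apply Finset.filter_congr; intro x _; simp [Nat.lt_succ_iff]
    rw [hle, aux_card_lt (by omega : r + 1 ≤ n)]
    have hd1 : d = (d - 1) + 1 := by omega
    conv_lhs => rw [hd1]
    rw [Nat.choose_succ_succ, Nat.succ_eq_add_one, ← hd1]
    exact Nat.add_comm _ _

lemma aux_lower (d k n r : ℕ) (hd : 2 ≤ d) (hk : 1 ≤ k) (hn : n = d * k)
    (hrr : r = (d - 1) * k) (f : Fin n → ℝ) (hsum : 0 ≤ ∑ x, f x)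
    (hpos : (univ.filter fun x => 0 ≤ f x).card = r) :
    r.choose d + r.choose (d - 1)
      ≤ ((univ.powersetCard d).filter fun Y => 0 ≤ ∑ y ∈ Y, f y).card := by
  classical
  set m1 := d - 1 with hm1def
  have hm1 : 1 ≤ m1 := by omega
  have hrm : r = k * m1 := by rw [hrr, hm1def, Nat.mul_comm]
  have hkn : k ≤ d * k := Nat.le_mul_of_pos_left k (by omega)
  have hrn : r + k = n := by
    have h1 : m1 * k = d * k - k := by rw [hm1def, Nat.sub_mul, one_mul]
    have h2 : r = m1 * k := by rw [hrm, Nat.mul_comm]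
    omega
  have hm1r : m1 ≤ r := by
    rw [hrm]; exact Nat.le_mul_of_pos_left m1 hk
  set P := univ.filter (fun x : Fin n => 0 ≤ f x) with hPdef
  have hPcard : Fintype.card ↥P = r := by rw [Fintype.card_coe]; exact hpos
  have hNcard : Fintype.card ↥(Pᶜ) = k := by
    rw [Fintype.card_coe, Finset.card_compl, Fintype.card_fin, hpos]; omega
  obtain ⟨h⟩ : Nonempty (Fin r ≃ ↥P) := ⟨(Fintype.equivFinOfCardEq hPcard).symm⟩
  obtain ⟨g⟩ : Nonempty (Fin k ≃ ↥(Pᶜ)) := ⟨(Fintype.equivFinOfCardEq hNcard).symm⟩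
  have hm1pos : 0 < m1 := hm1
  set gdiv : Fin r → Fin k := fun j => ⟨(j : ℕ) / m1, by
    rw [Nat.div_lt_iff_lt_mul hm1pos]
    exact lt_of_lt_of_le j.isLt (le_of_eq (by rw [hrm, Nat.mul_comm]))⟩ with hgdiv
  set chunk : Fin k → Finset (Fin r) := fun i => univ.filter (fun j => gdiv j = i)
    with hchunk
  have hmemchunk : ∀ (i : Fin k) (j : Fin r), j ∈ chunk i ↔ (j : ℕ) / m1 = (i : ℕ) := by
    intro i j
    rw [hchunk]
    simp only [Finset.mem_filter, Finset.mem_univ, true_and, hgdiv]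
    rw [Fin.ext_iff]
  have card_chunk : ∀ i, (chunk i).card = m1 := by
    intro i
    apply Finset.card_eq_of_bijective
      (fun t ht => (⟨(i : ℕ) * m1 + t, by
        have h1 : (i : ℕ) * m1 + t < ((i : ℕ) + 1) * m1 := by rw [Nat.add_mul]; omega
        have h2 : ((i : ℕ) + 1) * m1 ≤ k * m1 := Nat.mul_le_mul_right _ i.isLt
        omega⟩ : Fin r))
    · intro a ha
      rw [hmemchunk] at ha
      have hdm := Nat.div_add_mod (a : ℕ) m1
      have hml := Nat.mod_lt (a : ℕ) hm1pos
      rw [ha] at hdm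
      have hcomm : (i : ℕ) * m1 = m1 * (i : ℕ) := Nat.mul_comm _ _
      refine ⟨(a : ℕ) - (i : ℕ) * m1, by omega, ?_⟩
      apply Fin.ext
      show (i : ℕ) * m1 + ((a : ℕ) - (i : ℕ) * m1) = (a : ℕ)
      omega
    · intro t ht
      rw [hmemchunk]
      show ((i : ℕ) * m1 + t) / m1 = (i : ℕ)
      rw [Nat.mul_comm (i : ℕ) m1, Nat.mul_add_div hm1pos, Nat.div_eq_of_lt ht]
      omega
    · intro t t' ht ht' heq
      have h2 : (i : ℕ) * m1 + t = (i : ℕ) * m1 + t' := congrArg Fin.val heq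
      omega
  set block : Equiv.Perm (Fin r) → Fin k → Finset (Fin n) :=
    fun e i => (chunk i).image (fun j => ((h (e j) : ↥P) : Fin n))
      ∪ {((g i : ↥(Pᶜ)) : Fin n)} with hblockdef
  have hinj_coe : ∀ e : Equiv.Perm (Fin r),
      Function.Injective (fun j : Fin r => ((h (e j) : ↥P) : Fin n)) := by
    intro e a b hab
    exact e.injective (h.injective (Subtype.coe_injective hab))
  have hgnotP : ∀ i : Fin k, ((g i : ↥(Pᶜ)) : Fin n) ∉ P :=
    fun i => Finset.mem_compl.1 (g i).2
  have himgP : ∀ (e : Equiv.Perm (Fin r)) (i : Fin k), (chunk i).image (fun j => ((h (e j) : ↥P) : Fin n)) ⊆ P := by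
    intro e i x hx
    obtain ⟨j, _, rfl⟩ := Finset.mem_image.1 hx
    exact (h (e j)).2
  have hdisj : ∀ (e : Equiv.Perm (Fin r)) (i : Fin k), ((g i : ↥(Pᶜ)) : Fin n)
      ∉ (chunk i).image (fun j => ((h (e j) : ↥P) : Fin n)) :=
    fun e i hmem => hgnotP i (himgP e i hmem)
  have card_block : ∀ (e : Equiv.Perm (Fin r)) (i : Fin k), (block e i).card = d := by
    intro e i
    have hdisj2 : Disjoint ((chunk i).image (fun j => ((h (e j) : ↥P) : Fin n)))
        {((g i : ↥(Pᶜ)) : Fin n)} := Finset.disjoint_singleton_right.2 (hdisj e i)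
    rw [hblockdef]
    simp only []
    rw [Finset.card_union_of_disjoint hdisj2,
      Finset.card_image_of_injective _ (hinj_coe e), card_chunk, Finset.card_singleton]
    omega
  have sum_block : ∀ (e : Equiv.Perm (Fin r)) (i : Fin k), ∑ y ∈ block e i, f y
      = (∑ j ∈ chunk i, f ((h (e j) : ↥P) : Fin n)) + f ((g i : ↥(Pᶜ)) : Fin n) := by
    intro e i
    have hdisj2 : Disjoint ((chunk i).image (fun j => ((h (e j) : ↥P) : Fin n)))
        {((g i : ↥(Pᶜ)) : Fin n)} := Finset.disjoint_singleton_right.2 (hdisj e i)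
    rw [hblockdef]
    simp only []
    rw [Finset.sum_union hdisj2, Finset.sum_image (fun a _ b _ hab => hinj_coe e hab),
      Finset.sum_singleton]
  have hcompl : Pᶜ = univ.filter (fun x : Fin n => ¬ 0 ≤ f x) := by
    ext x; simp [hPdef]
  have total : ∀ (e : Equiv.Perm (Fin r)), ∑ i, ∑ y ∈ block e i, f y = ∑ x, f x := by
    intro e
    calc ∑ i, ∑ y ∈ block e i, f y
        = ∑ i, ((∑ j ∈ chunk i, f ((h (e j) : ↥P) : Fin n)) + f ((g i : ↥(Pᶜ)) : Fin n)) :=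
          Finset.sum_congr rfl (fun i _ => sum_block e i)
      _ = (∑ i, ∑ j ∈ chunk i, f ((h (e j) : ↥P) : Fin n))
          + ∑ i, f ((g i : ↥(Pᶜ)) : Fin n) := Finset.sum_add_distrib
      _ = (∑ j : Fin r, f ((h (e j) : ↥P) : Fin n)) + ∑ x : ↥(Pᶜ), f x := by
          rw [Finset.sum_fiberwise univ gdiv (fun j => f ((h (e j) : ↥P) : Fin n))]
          rw [Equiv.sum_comp g (fun x : ↥(Pᶜ) => f (x : Fin n))]
      _ = (∑ x : ↥P, f x) + ∑ x : ↥(Pᶜ), f x := by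
          rw [Equiv.sum_comp e (fun j => f ((h j : ↥P) : Fin n))]
          rw [Equiv.sum_comp h (fun x : ↥P => f (x : Fin n))]
      _ = (∑ x ∈ P, f x) + ∑ x ∈ Pᶜ, f x := by
          rw [Finset.sum_coe_sort Pᶜ f, Finset.sum_coe_sort P f]
      _ = ∑ x, f x := by
          rw [hcompl, hPdef, Finset.sum_filter_add_sum_filter_not]
  have hex : ∀ (e : Equiv.Perm (Fin r)), ∃ i, 0 ≤ ∑ y ∈ block e i, f y := by
    intro e
    by_contra hcon
    push_neg at hcon
    have hne : (univ : Finset (Fin k)).Nonempty := ⟨⟨0, by omega⟩, Finset.mem_univ _⟩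
    have hlt := Finset.sum_lt_sum_of_nonempty hne
      (f := fun i => ∑ y ∈ block e i, f y) (g := fun _ => (0 : ℝ))
      (fun i _ => hcon i)
    rw [total e, Finset.sum_const, smul_zero] at hlt
    linarith
  set Pairs := univ.filter (fun p : Equiv.Perm (Fin r) × Fin k =>
    0 ≤ ∑ y ∈ block p.1 p.2, f y) with hPairsdef
  have hlow : r ! ≤ Pairs.card := by
    have hcle : (univ : Finset (Equiv.Perm (Fin r))).card ≤ Pairs.card := by
      apply Finset.card_le_card_of_injOn (fun e => (e, (hex e).choose))
      · intro e _
        exact Finset.mem_filter.2 ⟨Finset.mem_univ _, (hex e).choose_spec⟩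
      · intro e1 _ e2 _ hpq
        exact congrArg Prod.fst hpq
    rwa [Finset.card_univ, Fintype.card_perm, Fintype.card_fin] at hcle
  set M := ((univ : Finset (Fin n)).powersetCard d).filter
    (fun Y => (0 ≤ ∑ y ∈ Y, f y) ∧ ¬ Y ⊆ P) with hMdef
  have hmaps : ∀ p ∈ Pairs, block p.1 p.2 ∈ M := by
    intro p hp
    refine Finset.mem_filter.2 ⟨Finset.mem_powersetCard.2 ⟨Finset.subset_univ _,
      card_block p.1 p.2⟩, (Finset.mem_filter.1 hp).2, ?_⟩
    intro hsub
    exact hgnotP p.2 (hsub (Finset.mem_union_right _ (Finset.mem_singleton_self _)))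
  have hfib : Pairs.card = ∑ Y ∈ M, (Pairs.filter fun p => block p.1 p.2 = Y).card :=
    Finset.card_eq_sum_card_fiberwise hmaps
  have hfibbound : ∀ Y ∈ M,
      (Pairs.filter fun p => block p.1 p.2 = Y).card ≤ m1 ! * (r - m1)! := by
    intro Y hY
    by_cases hne : (Pairs.filter fun p => block p.1 p.2 = Y).Nonempty
    · obtain ⟨p0, hp0⟩ := hne
      have hp0f := Finset.mem_filter.1 hp0
      have hb0 : block p0.1 p0.2 = Y := hp0f.2
      set i0 := p0.2 with hi0def
      set B := univ.filter (fun j : Fin r => ((h j : ↥P) : Fin n) ∈ Y) with hBdef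
      have hBeq : B = (chunk i0).image ⇑p0.1 := by
        ext j
        rw [hBdef]
        simp only [Finset.mem_filter, Finset.mem_univ, true_and]
        rw [← hb0, hblockdef]
        simp only [Finset.mem_union, Finset.mem_singleton, Finset.mem_image]
        constructor
        · rintro (⟨j', hj', hj'eq⟩ | heq)
          · exact ⟨j', hj', h.injective (Subtype.coe_injective hj'eq)⟩
          · exact absurd ((heq ▸ (h j).2 : ((g i0 : ↥(Pᶜ)) : Fin n) ∈ P)) (hgnotP i0)
        · rintro ⟨j', hj', rfl⟩
          exact Or.inl ⟨j', hj', rfl⟩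
      have hBcard : B.card = m1 := by
        rw [hBeq, Finset.card_image_of_injective _ p0.1.injective, card_chunk]
      have hi0all : ∀ p ∈ Pairs.filter (fun p => block p.1 p.2 = Y), p.2 = i0 := by
        intro p hp
        have hbp : block p.1 p.2 = Y := (Finset.mem_filter.1 hp).2
        have hgY : ((g p.2 : ↥(Pᶜ)) : Fin n) ∈ Y := by
          rw [← hbp]
          exact Finset.mem_union_right _ (Finset.mem_singleton_self _)
        rw [← hb0] at hgY
        rcases Finset.mem_union.1 hgY with hc | hc
        · exact absurd (himgP p0.1 i0 hc) (hgnotP p.2)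
        · exact g.injective (Subtype.coe_injective (Finset.mem_singleton.1 hc))
      have hsubE : ∀ p ∈ Pairs.filter (fun p => block p.1 p.2 = Y),
          (chunk i0).image ⇑p.1 = B := by
        intro p hp
        have h2 := hi0all p hp
        have hbp : block p.1 i0 = Y := by rw [← h2]; exact (Finset.mem_filter.1 hp).2
        apply Finset.eq_of_subset_of_card_le
        · intro j hj
          obtain ⟨j', hj', rfl⟩ := Finset.mem_image.1 hj
          rw [hBdef]
          refine Finset.mem_filter.2 ⟨Finset.mem_univ _, ?_⟩
          rw [← hbp, hblockdef]
          exact Finset.mem_union_left _ (Finset.mem_image_of_mem _ hj')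
        · rw [hBcard, Finset.card_image_of_injective _ p.1.injective, card_chunk]
      calc (Pairs.filter fun p => block p.1 p.2 = Y).card
          ≤ (univ.filter fun e : Equiv.Perm (Fin r) => (chunk i0).image ⇑e = B).card := by
            apply Finset.card_le_card_of_injOn Prod.fst
            · intro p hp
              exact Finset.mem_filter.2 ⟨Finset.mem_univ _, hsubE p hp⟩
            · intro p hp q hq hpq
              exact Prod.ext hpq (by rw [hi0all p hp, hi0all q hq])
        _ ≤ m1 ! * (r - m1)! := aux_perm_count _ _ (card_chunk i0) hBcard
    · rw [Finset.not_nonempty_iff_eq_empty.1 hne]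
      simp
  have hPairsBound : Pairs.card ≤ M.card * (m1 ! * (r - m1)!) := by
    rw [hfib]
    calc ∑ Y ∈ M, (Pairs.filter fun p => block p.1 p.2 = Y).card
        ≤ ∑ _Y ∈ M, m1 ! * (r - m1)! := Finset.sum_le_sum hfibbound
      _ = M.card * (m1 ! * (r - m1)!) := by rw [Finset.sum_const, smul_eq_mul]
  have hchooseM : r.choose m1 ≤ M.card := by
    have hfact : r.choose m1 * (m1 ! * (r - m1)!) = r ! := by
      rw [← Nat.mul_assoc]
      exact Nat.choose_mul_factorial_mul_factorial hm1r
    have hFpos : 0 < m1 ! * (r - m1)! :=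
      Nat.mul_pos (Nat.factorial_pos _) (Nat.factorial_pos _)
    apply Nat.le_of_mul_le_mul_right _ hFpos
    rw [hfact]
    exact le_trans hlow hPairsBound
  -- final assembly
  have hsplit := Finset.card_filter_add_card_filter_not
    (s := (univ.powersetCard d).filter fun Y : Finset (Fin n) => 0 ≤ ∑ y ∈ Y, f y)
    (p := fun Y => Y ⊆ P)
  have hMeq : (((univ.powersetCard d).filter fun Y : Finset (Fin n) => 0 ≤ ∑ y ∈ Y, f y).filter
      (fun Y => ¬ Y ⊆ P)) = M := by
    rw [Finset.filter_filter, hMdef]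
  rw [hMeq] at hsplit
  have h1 : r.choose d ≤ (((univ.powersetCard d).filter
      fun Y : Finset (Fin n) => 0 ≤ ∑ y ∈ Y, f y).filter (fun Y => Y ⊆ P)).card := by
    have hsub : P.powersetCard d ⊆ ((univ.powersetCard d).filter
        fun Y : Finset (Fin n) => 0 ≤ ∑ y ∈ Y, f y).filter (fun Y => Y ⊆ P) := by
      intro Y hY
      obtain ⟨hYP, hYcard⟩ := Finset.mem_powersetCard.1 hY
      refine Finset.mem_filter.2 ⟨Finset.mem_filter.2 ⟨Finset.mem_powersetCard.2
        ⟨Finset.subset_univ _, hYcard⟩, ?_⟩, hYP⟩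
      apply Finset.sum_nonneg
      intro y hy
      exact (Finset.mem_filter.1 (hYP hy)).2
    calc r.choose d = (P.powersetCard d).card := by
          rw [Finset.card_powersetCard, hpos]
      _ ≤ _ := Finset.card_le_card hsub
  omega


open Finset in
theorem stmt_16 (d n r : ℕ) (hd : 2 ≤ d) (hn : 0 < n) (hdvd : d ∣ n)
    (hr : r = (d - 1) * n / d) :
    IsLeast {m : ℕ | ∃ f : Fin n → ℝ, 0 ≤ ∑ x, f x ∧
        (univ.filter fun x => 0 ≤ f x).card = r ∧
        ((univ.powersetCard d).filter fun Y => 0 ≤ ∑ y ∈ Y, f y).card = m}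
      (r.choose d + r.choose (d - 1)) := by
  obtain ⟨k, hk⟩ := hdvd
  have hk1 : 1 ≤ k := by
    rcases Nat.eq_zero_or_pos k with h0 | h1
    · subst h0; simp at hk; omega
    · exact h1
  have hrk : r = (d - 1) * k := by
    rw [hr, hk, show (d - 1) * (d * k) = d * ((d - 1) * k) by ring]
    exact Nat.mul_div_cancel_left _ (by omega)
  constructor
  · obtain ⟨f, h1, h2, h3⟩ := aux_construction d k n r hd hk1 hk hrk
    exact ⟨f, h1, h2, h3⟩
  · rintro m ⟨f, h1, h2, h3⟩
    exact h3 ▸ aux_lower d k n r hd hk1 hk hrk f h1 h2
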